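/- Let k be a field of characteristic zero, X a finite type equipped with a fixed-point-free involution c : X → X, and Σ a subset of X such that Σ and c(Σ) are disjoint with union X; let g = |Σ|. Fix a linear order on X, let V be the k-vector space with basis (e_x)_{x∈X}, and in Λ(V) set L = ∑_{σ∈Σ} e_σ ∧ e_{cσ}, writing e_S for the ordered wedge product over a subset S ⊆ X. Let I ⊆ Σ and J ⊆ c(Σ) with |I| + |J| = i ≤ g. Then L^{g-i} ∧ e_{I∪J} lies in the k-linear span of the vectors e_{(I∪K) ∪ (J∪c(K))}, where K runs over the subsets of Σ of cardinality g - i satisfying K ∩ I = ∅ and c(K) ∩ J = ∅. -/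

import Mathlib

/-- The basis vector `e_x` of `V = X → k` inside the exterior algebra `Λ(V)`. -/
noncomputable def eVec (k : Type*) {X : Type*} [Field k] [DecidableEq X] (x : X) :
    ExteriorAlgebra k (X → k) :=
  ExteriorAlgebra.ι k (Pi.single x 1)

/-- The ordered wedge product `e_S = ⋀_{x ∈ S} e_x` over a finite subset `S ⊆ X`,
taken in the fixed linear order on `X`. -/
noncomputable def eWedge (k : Type*) {X : Type*} [Field k] [LinearOrder X] (S : Finset X) :
    ExteriorAlgebra k (X → k) :=
  ((S.sort (· ≤ ·)).map (eVec k)).prod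

/-- The isotypic component `L_σ = e_σ ∧ e_{cσ}` of the Lefschetz class. -/
noncomputable def Lsigma (k : Type*) {X : Type*} [Field k] [DecidableEq X] (c : X → X) (σ : X) :
    ExteriorAlgebra k (X → k) :=
  eVec k σ * eVec k (c σ)

/-- The product `L_K = ∏_{σ ∈ K} L_σ` (the factors `L_σ` have even degree, hence commute,
so the ordered product represents the product). -/
noncomputable def LK (k : Type*) {X : Type*} [Field k] [LinearOrder X] (c : X → X)
    (K : Finset X) : ExteriorAlgebra k (X → k) :=
  ((K.sort (· ≤ ·)).map (Lsigma k c)).prod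

/-- The Lefschetz class `L = ∑_{σ ∈ Σ} L_σ = ∑_{σ ∈ Σ} e_σ ∧ e_{cσ}`. -/
noncomputable def Lef (k : Type*) {X : Type*} [Field k] [DecidableEq X] (c : X → X)
    (S : Finset X) : ExteriorAlgebra k (X → k) :=
  ∑ σ ∈ S, Lsigma k c σ

section Helpers

variable {k X : Type*} [Field k] [DecidableEq X]

lemma eVec_anticomm (x y : X) : eVec k x * eVec k y = -(eVec k y * eVec k x) :=
  eq_neg_of_add_eq_zero_left (ExteriorAlgebra.ι_add_mul_swap _ _)

lemma eVec_sq (x : X) : eVec k x * eVec k x = 0 := ExteriorAlgebra.ι_sq_zero _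

lemma mul_prod_eq_zero (x : X) (l : List X) (h : x ∈ l) :
    eVec k x * (l.map (eVec k)).prod = 0 := by
  induction l with
  | nil => simp at h
  | cons a t ih =>
    rw [List.map_cons, List.prod_cons, ← mul_assoc]
    rcases List.mem_cons.1 h with rfl | h
    · rw [eVec_sq, zero_mul]
    · rw [eVec_anticomm, neg_mul, mul_assoc, ih h, mul_zero, neg_zero]

lemma prod_eq_zero_of_not_nodup (l : List X) (h : ¬ l.Nodup) :
    (l.map (eVec k)).prod = 0 := by
  induction l with
  | nil => simp at h
  | cons a t ih =>
    rw [List.map_cons, List.prod_cons]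
    by_cases ha : a ∈ t
    · exact mul_prod_eq_zero a t ha
    · rw [ih fun hn => h (List.nodup_cons.2 ⟨ha, hn⟩), mul_zero]

lemma prod_perm {l₁ l₂ : List X} (h : l₁.Perm l₂) :
    ∃ c : k, (l₁.map (eVec k)).prod = c • (l₂.map (eVec k)).prod := by
  induction h with
  | nil => exact ⟨1, by simp⟩
  | cons a h ih =>
    obtain ⟨c, hc⟩ := ih
    exact ⟨c, by simp [List.prod_cons, hc, mul_smul_comm]⟩
  | swap x y l =>
    refine ⟨-1, ?_⟩
    simp only [List.map_cons, List.prod_cons, ← mul_assoc]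
    rw [eVec_anticomm y x]
    simp
  | trans h1 h2 ih1 ih2 =>
    obtain ⟨c, hc⟩ := ih1; obtain ⟨d, hd⟩ := ih2
    exact ⟨c * d, by rw [hc, hd, smul_smul]⟩

lemma pair_central {M : Type*} [AddCommGroup M] [Module k M] (a b : M)
    (x : ExteriorAlgebra k M) :
    (ExteriorAlgebra.ι k a * ExteriorAlgebra.ι k b) * x
      = x * (ExteriorAlgebra.ι k a * ExteriorAlgebra.ι k b) := by
  have hswap : ∀ u v : M, ExteriorAlgebra.ι k u * ExteriorAlgebra.ι k v
      = -(ExteriorAlgebra.ι k v * ExteriorAlgebra.ι k u) := fun u v =>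
    eq_neg_of_add_eq_zero_left (ExteriorAlgebra.ι_add_mul_swap _ _)
  induction x using ExteriorAlgebra.induction with
  | algebraMap r => rw [Algebra.commutes]
  | ι m => rw [mul_assoc, hswap b m, mul_neg, ← mul_assoc, hswap a m, neg_mul, neg_neg, mul_assoc]
  | mul p q hp hq => rw [← mul_assoc, hp, mul_assoc, hq, ← mul_assoc]
  | add p q hp hq => rw [mul_add, hp, hq, add_mul]

lemma Lsigma_central (c : X → X) (σ : X) (x : ExteriorAlgebra k (X → k)) :
    Lsigma k c σ * x = x * Lsigma k c σ := pair_central _ _ x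

lemma Lsigma_sq (c : X → X) (σ : X) : Lsigma k c σ * Lsigma k c σ = 0 := by
  have h := mul_prod_eq_zero (k := k) σ [c σ, σ, c σ] (by simp)
  simpa [Lsigma, eVec, List.prod_cons, mul_assoc] using h

lemma Lprod_mul_of_mem (c : X → X) (l : List X) (σ : X) (h : σ ∈ l) :
    (l.map (Lsigma k c)).prod * Lsigma k c σ = 0 := by
  induction l with
  | nil => simp at h
  | cons a t ih =>
    rw [List.map_cons, List.prod_cons, mul_assoc]
    rcases List.mem_cons.1 h with rfl | h
    · rw [← Lsigma_central, ← mul_assoc, Lsigma_sq, zero_mul]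
    · rw [ih h, mul_zero]

lemma Lprod_pairwise (c : X → X) (l : List X) :
    (l.map (Lsigma k c)).Pairwise Commute := by
  rw [List.pairwise_map]
  induction l with
  | nil => exact List.Pairwise.nil
  | cons a t ih => exact List.Pairwise.cons (fun b _ => Lsigma_central c a _) ih

lemma Lprod_perm (c : X → X) {l₁ l₂ : List X} (h : l₁.Perm l₂) :
    (l₁.map (Lsigma k c)).prod = (l₂.map (Lsigma k c)).prod :=
  (h.map (Lsigma k c)).prod_eq' (Lprod_pairwise c l₁)

lemma pairList_prod (c : X → X) (l : List X) :
    ((l.flatMap fun σ => [σ, c σ]).map (eVec k)).prod = (l.map (Lsigma k c)).prod := by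
  induction l with
  | nil => simp
  | cons a t ih =>
    rw [List.flatMap_cons, List.map_append, List.prod_append, ih]
    simp [Lsigma, List.prod_cons, mul_assoc]

end Helpers

section Main

variable {k X : Type*} [Field k] [LinearOrder X]

lemma LK_mul_Lsigma_of_not_mem (c : X → X) (K : Finset X) (σ : X) (hσ : σ ∉ K) :
    LK k c K * Lsigma k c σ = LK k c (insert σ K) := by
  have hperm : ((insert σ K).sort (· ≤ ·)).Perm (σ :: K.sort (· ≤ ·)) := by
    apply List.perm_of_nodup_nodup_toFinset_eq (Finset.sort_nodup _ _)
    · exact List.nodup_cons.2 ⟨by simp [Finset.mem_sort, hσ], Finset.sort_nodup _ _⟩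
    · simp [Finset.sort_toFinset, List.toFinset_cons, Finset.sort_toFinset]
  simp only [LK]
  rw [Lprod_perm c hperm, List.map_cons, List.prod_cons, ← Lsigma_central]

lemma Lef_pow_mem (c : X → X) (S : Finset X) (n : ℕ) :
    Lef k c S ^ n ∈ Submodule.span k (LK k c '' {K : Finset X | K ⊆ S ∧ K.card = n}) := by
  induction n with
  | zero =>
    rw [pow_zero]
    exact Submodule.subset_span ⟨∅, ⟨Finset.empty_subset _, Finset.card_empty⟩, by simp [LK]⟩
  | succ n ih =>
    rw [pow_succ]
    have H : ∀ x ∈ Submodule.span k (LK k c '' {K : Finset X | K ⊆ S ∧ K.card = n}),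
        x * Lef k c S ∈
          Submodule.span k (LK k c '' {K : Finset X | K ⊆ S ∧ K.card = n + 1}) := by
      intro x hx
      induction hx using Submodule.span_induction with
      | mem x hx =>
        obtain ⟨K, ⟨hKS, hKcard⟩, rfl⟩ := hx
        rw [Lef, Finset.mul_sum]
        apply Submodule.sum_mem
        intro σ hσ
        by_cases hmem : σ ∈ K
        · rw [LK, Lprod_mul_of_mem c _ σ ((Finset.mem_sort _).2 hmem)]
          exact Submodule.zero_mem _
        · rw [LK_mul_Lsigma_of_not_mem c K σ hmem]
          exact Submodule.subset_span ⟨insert σ K,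
            ⟨Finset.insert_subset hσ hKS, by rw [Finset.card_insert_of_notMem hmem, hKcard]⟩, rfl⟩
      | zero => rw [zero_mul]; exact Submodule.zero_mem _
      | add x y _ _ hx hy => rw [add_mul]; exact Submodule.add_mem _ hx hy
      | smul a x _ hx => rw [smul_mul_assoc]; exact Submodule.smul_mem _ _ hx
    exact H _ ih

end Main



/-- Lemma 2.3 of the paper, in the exterior-algebra model: for `I ⊆ Σ`, `J ⊆ cΣ` with
`|I| + |J| = i ≤ g`, the class `L^{g-i} ∧ e_{I∪J}` lies in the span of the classes
`e_{(I∪K) ∪ (J∪cK)}` with `K ⊆ Σ`, `|K| = g - i`, `K ∩ I = ∅` and `c(K) ∩ J = ∅`. -/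
theorem stmt6 (k X : Type*) [Field k] [CharZero k] [Fintype X] [LinearOrder X]
    (c : X → X) (hinv : Function.Involutive c) (hfree : ∀ x : X, c x ≠ x)
    (S : Finset X) (hdisj : Disjoint S (S.image c)) (hcover : S ∪ S.image c = Finset.univ)
    (g : ℕ) (hg : g = S.card)
    (I J : Finset X) (hI : I ⊆ S) (hJ : J ⊆ S.image c)
    (i : ℕ) (hcard : I.card + J.card = i) (hig : i ≤ g) :
    Lef k c S ^ (g - i) * eWedge k (I ∪ J) ∈
      Submodule.span k
        ((fun K : Finset X => eWedge k ((I ∪ K) ∪ (J ∪ K.image c))) ''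
          {K : Finset X | K ⊆ S ∧ K.card = g - i ∧ K ∩ I = ∅ ∧ K.image c ∩ J = ∅}) := by
  classical
  have h1 := Lef_pow_mem (k := k) c S (g - i)
  have H : ∀ x ∈ Submodule.span k (LK k c '' {K : Finset X | K ⊆ S ∧ K.card = g - i}),
      x * eWedge k (I ∪ J) ∈ Submodule.span k
        ((fun K : Finset X => eWedge k ((I ∪ K) ∪ (J ∪ K.image c))) ''
          {K : Finset X | K ⊆ S ∧ K.card = g - i ∧ K ∩ I = ∅ ∧ K.image c ∩ J = ∅}) := by
    intro x hx
    induction hx using Submodule.span_induction with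
    | mem x hx =>
      obtain ⟨K, ⟨hKS, hKcard⟩, rfl⟩ := hx
      set A : List X := (K.sort (· ≤ ·)).flatMap fun σ => [σ, c σ] with hA
      set B : List X := (I ∪ J).sort (· ≤ ·) with hB
      have hprod : LK k c K * eWedge k (I ∪ J) = ((A ++ B).map (eVec k)).prod := by
        rw [List.map_append, List.prod_append, hA, pairList_prod]
        rfl
      by_cases hnd : (A ++ B).Nodup
      · have hdis := (List.nodup_append.1 hnd).2.2
        have hKI : K ∩ I = ∅ := by
          apply Finset.eq_empty_of_forall_notMem
          intro x hx
          rw [Finset.mem_inter] at hx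
          exact hdis _ (List.mem_flatMap.2 ⟨x, (Finset.mem_sort _).2 hx.1, by simp⟩)
            _ ((Finset.mem_sort _).2 (Finset.mem_union_left _ hx.2)) rfl
        have hKJ : K.image c ∩ J = ∅ := by
          apply Finset.eq_empty_of_forall_notMem
          intro y hy
          rw [Finset.mem_inter, Finset.mem_image] at hy
          obtain ⟨⟨σ, hσK, rfl⟩, hyJ⟩ := hy
          exact hdis _ (List.mem_flatMap.2 ⟨σ, (Finset.mem_sort _).2 hσK, by simp⟩)
            _ ((Finset.mem_sort _).2 (Finset.mem_union_right _ hyJ)) rfl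
        have htf : (A ++ B).toFinset = (I ∪ K) ∪ (J ∪ K.image c) := by
          ext x
          simp only [List.toFinset_append, Finset.mem_union, List.mem_toFinset, hA, hB,
            List.mem_flatMap, Finset.mem_sort, List.mem_cons, List.not_mem_nil, or_false,
            Finset.mem_image, List.mem_singleton]
          constructor
          · rintro ((⟨σ, hσ, rfl | rfl⟩) | h)
            · exact Or.inl (Or.inr hσ)
            · exact Or.inr (Or.inr ⟨σ, hσ, rfl⟩)
            · tauto
          · rintro ((h | h) | (h | ⟨σ, hσ, rfl⟩))
            · exact Or.inr (Or.inl h)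
            · exact Or.inl ⟨x, h, Or.inl rfl⟩
            · exact Or.inr (Or.inr h)
            · exact Or.inl ⟨σ, hσ, Or.inr rfl⟩
        have hperm : (A ++ B).Perm (((I ∪ K) ∪ (J ∪ K.image c)).sort (· ≤ ·)) :=
          List.perm_of_nodup_nodup_toFinset_eq hnd (Finset.sort_nodup _ _)
            (by rw [htf, Finset.sort_toFinset])
        obtain ⟨c0, hc0⟩ := prod_perm (k := k) hperm
        rw [hprod, hc0]
        exact Submodule.smul_mem _ _
          (Submodule.subset_span ⟨K, ⟨hKS, hKcard, hKI, hKJ⟩, rfl⟩)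
      · rw [hprod, prod_eq_zero_of_not_nodup _ hnd]
        exact Submodule.zero_mem _
    | zero => rw [zero_mul]; exact Submodule.zero_mem _
    | add x y _ _ hx hy => rw [add_mul]; exact Submodule.add_mem _ hx hy
    | smul a x _ hx => rw [smul_mul_assoc]; exact Submodule.smul_mem _ _ hx
  exact H _ h1
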